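/- Let τ be an isometry of E, different from the identity, whose linear part is orientation-preserving (has determinant 1), and which fixes every point of a line r (i.e., τ is a rotation with axis r). Let ℓ be a line such that ℓ and its image τ(ℓ) have a common point. Then either ℓ intersects the axis r, or the direction of ℓ is orthogonal to the direction of r. -/

import Mathlib

noncomputable section

abbrev E : Type := EuclideanSpace ℝ (Fin 3)

/-- A line: a one-dimensional affine subspace. -/
def IsLine (s : AffineSubspace ℝ E) : Prop := Module.finrank ℝ s.direction = 1

/-- A plane: a two-dimensional affine subspace. -/
def IsPlane (s : AffineSubspace ℝ E) : Prop := Module.finrank ℝ s.direction = 2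

/-- A set of points lies on a circle or a line: it is concyclic (contained in the
intersection of a sphere and a plane) or collinear. -/
def ConcyclicOrCollinear (s : Set E) : Prop :=
  EuclideanGeometry.Concyclic s ∨ Collinear ℝ s

/-- `τ` is a rotation with axis `r`: an isometry different from the identity whose
linear part has determinant 1 and which fixes every point of the line `r`. -/
def IsRotation (τ : E ≃ᵃⁱ[ℝ] E) (r : AffineSubspace ℝ E) : Prop :=
  τ ≠ AffineIsometryEquiv.refl ℝ E ∧
  LinearMap.det (τ.linearIsometryEquiv.toLinearEquiv : E →ₗ[ℝ] E) = 1 ∧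
  IsLine r ∧ ∀ x ∈ r, τ x = x

/-- `(α 0, α 1, α 2, α 3)` is a rotation quadrangle with relative revolute axes
`r i` (in the moving space): each relative displacement `τ_{i,i+1} = α (i+1) ∘ (α i)⁻¹`
is a rotation whose axis is the image `α i (r i)`. -/
def IsRotationQuadrangle (α : Fin 4 → (E ≃ᵃⁱ[ℝ] E)) (r : Fin 4 → AffineSubspace ℝ E) : Prop :=
  ∀ i : Fin 4,
    IsRotation ((α i).symm.trans (α (i + 1)))
      ((r i).map (α i).toAffineIsometry.toAffineMap)

open scoped RealInnerProductSpace

lemma aux_fix (L : E ≃ₗᵢ[ℝ] E)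
    (hdet : LinearMap.det (L.toLinearEquiv : E →ₗ[ℝ] E) = 1)
    (w u : E) (hwu : LinearIndependent ℝ ![w, u]) (hw : L w = w) (hu : L u = u) :
    ∀ x, L x = x := by
  set W : Submodule ℝ E := Submodule.span ℝ (Set.range ![w, u]) with hW
  have hWfix : ∀ x ∈ W, L x = x := by
    intro x hx
    induction hx using Submodule.span_induction with
    | mem x hx =>
        obtain ⟨i, rfl⟩ := hx
        fin_cases i <;> simpa
    | zero => simp
    | add x y _ _ hx hy => simp [map_add, hx, hy]
    | smul c x _ hx => simp [map_smul, hx]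
  have hWrank : Module.finrank ℝ W = 2 := by
    rw [hW, finrank_span_eq_card hwu]; simp
  have hE3 : Module.finrank ℝ E = 3 := by simp [finrank_euclideanSpace]
  have hWorth : Module.finrank ℝ Wᗮ = 1 := by
    have := Submodule.finrank_add_finrank_orthogonal (K := W)
    omega
  obtain ⟨n, hnW, hn0⟩ : ∃ n ∈ Wᗮ, n ≠ 0 := by
    by_contra h
    push_neg at h
    have : Wᗮ = ⊥ := by
      ext x; simp only [Submodule.mem_bot]
      constructor
      · intro hx; by_contra hx0; exact hx0 (h x hx)
      · rintro rfl; simp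
    rw [this] at hWorth; simp at hWorth
  have hLn : L n ∈ Wᗮ := by
    rw [Submodule.mem_orthogonal]
    intro y hy
    have : ⟪L y, L n⟫ = ⟪y, n⟫ := L.inner_map_map y n
    rw [hWfix y hy] at this
    rw [this]
    exact (Submodule.mem_orthogonal W n).mp hnW y hy
  have hWspan : Wᗮ = Submodule.span ℝ {n} := by
    refine (Submodule.eq_of_le_of_finrank_eq ?_ ?_).symm
    · simpa [Submodule.span_le] using hnW
    · rw [hWorth, finrank_span_singleton hn0]
  obtain ⟨c, hc⟩ : ∃ c : ℝ, L n = c • n := by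
    have := hLn
    rw [hWspan, Submodule.mem_span_singleton] at this
    obtain ⟨c, hc⟩ := this
    exact ⟨c, hc.symm⟩
  have hnotW : n ∉ W := fun hnWmem => hn0 (by
    have := (Submodule.mem_orthogonal W n).mp hnW n hnWmem
    exact inner_self_eq_zero.mp this)
  have hind : LinearIndependent ℝ (Fin.cons n ![w, u] : Fin 3 → E) :=
    hwu.fin_cons (x := n) (by simpa [hW] using hnotW)
  have hb := basisOfLinearIndependentOfCardEqFinrank hind (by simp [hE3])
  set b := basisOfLinearIndependentOfCardEqFinrank hind (by simp [hE3]) with hbdef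
  have hbcoe : ⇑b = Fin.cons n ![w, u] := coe_basisOfLinearIndependentOfCardEqFinrank _ _
  have hb0 : b 0 = n := by rw [hbcoe]; rfl
  have hb1 : b 1 = w := by rw [hbcoe]; rfl
  have hb2 : b 2 = u := by rw [hbcoe]; rfl
  have hLb : ∀ j, (L.toLinearEquiv : E →ₗ[ℝ] E) (b j) = (![c, 1, 1] j) • b j := by
    intro j
    fin_cases j
    · simpa [hbcoe] using hc
    · simpa [hbcoe] using hw
    · simp only [hbcoe]
      show L u = ![c, 1, 1] 2 • u
      simpa using hu
  have hM : LinearMap.toMatrix b b (L.toLinearEquiv : E →ₗ[ℝ] E) =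
      Matrix.diagonal ![c, 1, 1] := by
    ext i j
    rw [LinearMap.toMatrix_apply, hLb j, map_smul, b.repr_self]
    rcases eq_or_ne i j with rfl | hij
    · simp [Matrix.diagonal_apply_eq, Finsupp.single_apply]
    · simp [Matrix.diagonal_apply_ne _ hij, Finsupp.single_apply, Ne.symm hij]
  have hdetc : c = 1 := by
    have := LinearMap.det_toMatrix b (L.toLinearEquiv : E →ₗ[ℝ] E)
    rw [hM] at this
    rw [← hdet, ← this, Matrix.det_diagonal]
    simp [Fin.prod_univ_three]
  have hLn' : L n = n := by rw [hc, hdetc, one_smul]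
  intro x
  have : (L.toLinearEquiv : E →ₗ[ℝ] E) = LinearMap.id := by
    apply b.ext
    intro i
    fin_cases i
    · simpa [hbcoe] using hLn'
    · simpa [hbcoe] using hw
    · simp only [hbcoe]
      show L u = u
      exact hu
  have := LinearMap.ext_iff.mp this x
  simpa using this


/-- If a line `ℓ` and its image under a rotation with axis `r` have a
common point, then either `ℓ` intersects the axis `r`, or the direction of `ℓ` is
orthogonal to the direction of `r`. -/
theorem line_meeting_its_rotated_image
    (τ : E ≃ᵃⁱ[ℝ] E) (r : AffineSubspace ℝ E) (hrot : IsRotation τ r)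
    (ℓ : AffineSubspace ℝ E) (hℓ : IsLine ℓ)
    (hmeet : ∃ X : E, X ∈ ℓ ∧ X ∈ ℓ.map τ.toAffineIsometry.toAffineMap) :
    (∃ X : E, X ∈ ℓ ∧ X ∈ r) ∨
      (∀ v ∈ ℓ.direction, ∀ w ∈ r.direction, ⟪v, w⟫ = 0) := by
  obtain ⟨hne, hdet, hrline, hfix⟩ := hrot

  set L := τ.linearIsometryEquiv with hLdef
  -- r is nonempty
  have hrne : r ≠ ⊥ := by
    intro h
    rw [IsLine, h, AffineSubspace.direction_bot] at hrline
    simp at hrline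
  obtain ⟨P₀, hP₀⟩ := (AffineSubspace.nonempty_iff_ne_bot r).mpr hrne
  -- L fixes r.direction
  have hLdir : ∀ x ∈ r.direction, L x = x := by
    intro x hx
    rw [AffineSubspace.mem_direction_iff_eq_vsub ⟨P₀, hP₀⟩] at hx
    obtain ⟨p, hp, q, hq, rfl⟩ := hx
    rw [τ.map_vsub, hfix p hp, hfix q hq]
  by_cases horth : ∀ v ∈ ℓ.direction, ∀ w ∈ r.direction, ⟪v, w⟫ = 0
  · exact Or.inr horth
  push_neg at horth
  obtain ⟨v, hv, w, hw, hvw⟩ := horth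
  left
  obtain ⟨X, hXℓ, hXmap⟩ := hmeet
  rw [AffineSubspace.mem_map] at hXmap
  obtain ⟨Y, hYℓ, hYX⟩ := hXmap
  have hYX' : τ Y = X := hYX
  -- ⟪X -ᵥ Y, w⟫ = 0
  have hXY0 : ⟪X -ᵥ Y, w⟫ = 0 := by
    have eLw : L w = w := hLdir w hw
    have e : L (Y -ᵥ P₀) = X -ᵥ P₀ := by rw [τ.map_vsub, hYX', hfix P₀ hP₀]
    have h1 : ⟪X -ᵥ P₀, w⟫ = ⟪Y -ᵥ P₀, w⟫ :=
      calc ⟪X -ᵥ P₀, w⟫ = ⟪L (Y -ᵥ P₀), L w⟫ := by rw [e, eLw]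
        _ = ⟪Y -ᵥ P₀, w⟫ := L.inner_map_map _ _
    have h2 : (X -ᵥ P₀) - (Y -ᵥ P₀) = X -ᵥ Y := by
      rw [vsub_sub_vsub_cancel_right]
    rw [← h2, inner_sub_left, h1, sub_self]
  -- X = Y
  have hv0 : v ≠ 0 := by
    intro h; rw [h] at hvw; simp at hvw
  have hldir : ℓ.direction = Submodule.span ℝ {v} := by
    refine (Submodule.eq_of_le_of_finrank_eq ?_ ?_).symm
    · simpa [Submodule.span_le] using hv
    · rw [hℓ, finrank_span_singleton hv0]
  have hXYdir : X -ᵥ Y ∈ ℓ.direction := AffineSubspace.vsub_mem_direction hXℓ hYℓ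
  rw [hldir, Submodule.mem_span_singleton] at hXYdir
  obtain ⟨c, hc⟩ := hXYdir
  have hc0 : c = 0 := by
    rw [← hc, real_inner_smul_left] at hXY0
    rcases mul_eq_zero.mp hXY0 with h | h
    · exact h
    · exact absurd h hvw
  have hXeqY : X = Y := by
    have : X -ᵥ Y = 0 := by rw [← hc, hc0, zero_smul]
    exact vsub_eq_zero_iff_eq.mp this
  -- Y is fixed by τ
  have hτY : τ Y = Y := by rw [hYX', hXeqY]
  refine ⟨Y, hYℓ, ?_⟩
  -- show Y ∈ r
  by_contra hYr
  -- u := Y -ᵥ P₀ not in r.direction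
  have hu_dir : (Y -ᵥ P₀) ∉ r.direction := by
    intro h
    exact hYr ((AffineSubspace.vsub_right_mem_direction_iff_mem hP₀ Y).mp h)
  have hLu : L (Y -ᵥ P₀) = Y -ᵥ P₀ := by
    rw [τ.map_vsub, hτY, hfix P₀ hP₀]
  have hw0 : w ≠ 0 := by
    intro h; rw [h] at hvw; simp at hvw
  have hrdir : r.direction = Submodule.span ℝ {w} := by
    refine (Submodule.eq_of_le_of_finrank_eq ?_ ?_).symm
    · simpa [Submodule.span_le] using hw
    · rw [hrline, finrank_span_singleton hw0]
  have hind : LinearIndependent ℝ ![w, Y -ᵥ P₀] := by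
    rw [linearIndependent_fin2]
    constructor
    · intro h
      simp only [Matrix.cons_val_one, Matrix.head_cons, Matrix.cons_val_zero] at h
      apply hu_dir
      rw [h]
      exact r.direction.zero_mem
    · intro a ha
      simp only [Matrix.cons_val_one, Matrix.head_cons, Matrix.cons_val_zero] at ha
      have ha0 : a ≠ 0 := by
        rintro rfl
        rw [zero_smul] at ha
        exact hw0 ha.symm
      apply hu_dir
      rw [hrdir, Submodule.mem_span_singleton]
      exact ⟨a⁻¹, by rw [← ha, smul_smul, inv_mul_cancel₀ ha0, one_smul]⟩
  have hLid : ∀ x, L x = x := aux_fix L hdet w (Y -ᵥ P₀) hind (hLdir w hw) hLu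
  apply hne
  refine AffineIsometryEquiv.ext fun x => ?_
  have h3 : τ x -ᵥ τ P₀ = x -ᵥ P₀ := by rw [← τ.map_vsub, hLid]
  rw [hfix P₀ hP₀] at h3
  have h4 := vsub_left_cancel h3
  simpa using h4
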